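/- (Corollaire fondamental 3.3.6) The map sending a Dallajascar to its Jassological word induces a bijection between the set of equivalence classes of Dallajascars and the set of Simple Jassological words; precisely, on the sigma type Σ n : ℕ, Dallajascar (Fin (n+1)), the relation 'being equivalent' is an equivalence relation, the map D ↦ M(D) is constant on equivalence classes, and the induced map from the quotient to {M : List Bool | M is a Simple Jassological word} is a bijection. -/

import Mathlib

set_option maxHeartbeats 1000000

theorem prefix_append_cases {α : Type*} {p l m : List α} (h : p <+: l ++ m) :
    p <+: l ∨ ∃ q, q <+: m ∧ p = l ++ q := by
  by_cases hl : p.length ≤ l.length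
  · exact Or.inl (List.prefix_of_prefix_length_le h (l.prefix_append m) hl)
  · right
    have hlp : l <+: p :=
      List.prefix_of_prefix_length_le (l.prefix_append m) h (le_of_not_ge hl)
    obtain ⟨q, rfl⟩ := hlp
    refine ⟨q, ?_, rfl⟩
    obtain ⟨r, hr⟩ := h
    rw [List.append_assoc] at hr
    exact ⟨r, (List.append_cancel_left hr)⟩

theorem prefix_cons_cases {α : Type*} {p : List α} {a : α} {l : List α} (h : p <+: a :: l) :
    p = [] ∨ ∃ q, q <+: l ∧ p = a :: q := by
  cases p with
  | nil => exact Or.inl rfl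
  | cons b q =>
    obtain ⟨r, hr⟩ := h
    injection hr with h1 h2
    exact Or.inr ⟨q, ⟨r, h2⟩, by rw [h1]⟩

theorem prefix_singleton_cases {α : Type*} {p : List α} {a : α} (h : p <+: [a]) :
    p = [] ∨ p = [a] := by
  rcases prefix_cons_cases h with h | ⟨q, hq, rfl⟩
  · exact Or.inl h
  · right; rw [List.prefix_nil.1 hq]

inductive PTree : Type where
  | node : List PTree → PTree

namespace PTree

theorem sizeOf_lt_of_mem' {t : PTree} {ts : List PTree} (h : t ∈ ts) :
    sizeOf t < sizeOf (PTree.node ts) := by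
  have := List.sizeOf_lt_of_mem h
  simp only [node.sizeOf_spec]; omega

theorem strongInd {motive : PTree → Prop}
    (h : ∀ ts : List PTree, (∀ t ∈ ts, motive t) → motive (.node ts)) : ∀ t, motive t
  | .node ts => h ts (fun c _hc => strongInd h c)
termination_by t => sizeOf t
decreasing_by exact sizeOf_lt_of_mem' _hc

def word : PTree → List Bool
  | .node ts => true :: ((ts.attach.map (fun c => word c.1)).flatten ++ [false])
termination_by t => sizeOf t
decreasing_by exact sizeOf_lt_of_mem' c.2

theorem word_node (ts : List PTree) :
    word (.node ts) = true :: ((ts.map word).flatten ++ [false]) := by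
  rw [word, List.attach_map_val (l := ts) (f := word)]

end PTree

open PTree

/-- Dyck words : balanced, and every prefix has at least as many opens as closes. -/
def Dyck (l : List Bool) : Prop :=
  (∀ p, p <+: l → p.count false ≤ p.count true) ∧ l.count true = l.count false

def SimpleJasso' (M : List Bool) : Prop :=
  M ≠ [] ∧ M.count true = M.count false ∧
    ∀ t : List Bool, t <+: M → t ≠ [] → t ≠ M → t.count false < t.count true

theorem Dyck.nil : Dyck ([] : List Bool) :=
  ⟨fun p hp => by simp [List.prefix_nil.1 hp], rfl⟩

theorem Dyck.append {l m : List Bool} (hl : Dyck l) (hm : Dyck m) : Dyck (l ++ m) := by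
  refine ⟨fun p hp => ?_, ?_⟩
  · rcases prefix_append_cases hp with h | ⟨q, hq, rfl⟩
    · exact hl.1 p h
    · have h1 := hm.1 q hq
      have h2 := hl.2
      simp only [List.count_append]; omega
  · have h1 := hl.2; have h2 := hm.2
    simp only [List.count_append]; omega

theorem dyck_flat : ∀ us : List PTree, (∀ t ∈ us, Dyck (word t)) →
    Dyck ((us.map word).flatten) := by
  intro us
  induction us with
  | nil => intro _; simpa using Dyck.nil
  | cons u us ihl =>
    intro h
    have := (h u (by simp)).append (ihl (fun t ht => h t (by simp [ht])))
    simpa using this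

theorem dyck_word : ∀ t : PTree, Dyck (word t) := by
  refine PTree.strongInd (fun ts ih => ?_)
  have hflat := dyck_flat ts ih
  rw [word_node]
  refine ⟨fun p hp => ?_, ?_⟩
  · rcases prefix_cons_cases hp with rfl | ⟨q, hq, rfl⟩
    · simp
    · rcases prefix_append_cases hq with h | ⟨q', hq', rfl⟩
      · have := hflat.1 q h
        simp [List.count_cons]; omega
      · rcases prefix_singleton_cases hq' with rfl | rfl <;>
        · have := hflat.2
          simp [List.count_append, List.count_cons]; omega
  · have := hflat.2
    simp [List.count_append, List.count_cons]; omega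

theorem simple_word (t : PTree) : SimpleJasso' (word t) := by
  obtain ⟨ts, rfl⟩ : ∃ ts, t = PTree.node ts := by cases t with | node ts => exact ⟨ts, rfl⟩
  have hflat := dyck_flat ts (fun c _ => dyck_word c)
  have hw := dyck_word (PTree.node ts)
  rw [word_node] at *
  refine ⟨by simp, hw.2, fun p hp hne hproper => ?_⟩
  rcases prefix_cons_cases hp with rfl | ⟨q, hq, rfl⟩
  · exact absurd rfl hne
  · rcases prefix_append_cases hq with h | ⟨q', hq', rfl⟩
    · have := hflat.1 q h
      simp [List.count_cons]; omega
    · rcases prefix_singleton_cases hq' with rfl | rfl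
      · have := hflat.2
        simp [List.count_append, List.count_cons]; omega
      · exact absurd rfl hproper

/-- Shape lemma: a simple word is `true :: I ++ [false]` with `I` Dyck. -/
theorem simple_shape {M : List Bool} (h : SimpleJasso' M) :
    ∃ I, M = true :: I ++ [false] ∧ Dyck I := by
  obtain ⟨hne, hcnt, hpre⟩ := h
  obtain ⟨b, M₁, rfl⟩ : ∃ b M₁, M = b :: M₁ := by
    cases M with
    | nil => exact absurd rfl hne
    | cons b M₁ => exact ⟨b, M₁, rfl⟩
  have hM₁ : M₁ ≠ [] := by
    rintro rfl
    cases b <;> simp at hcnt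
  have hb : b = true := by
    have h1 := hpre [b] ⟨M₁, rfl⟩ (by simp) (by simp [hM₁])
    cases b
    · simp at h1
    · rfl
  subst hb
  set I := M₁.dropLast with hI
  have hsplit : M₁ = I ++ [M₁.getLast hM₁] := (List.dropLast_append_getLast hM₁).symm
  have hIpre : ∀ p, p <+: I → p.count false ≤ p.count true := by
    intro p hp
    have hp2 : (true :: p) <+: true :: M₁ := by
      rw [hsplit]
      exact (List.cons_prefix_cons).2 ⟨rfl, hp.trans (I.prefix_append _)⟩
    have hlen : p.length < M₁.length := by
      conv_rhs => rw [hsplit]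
      have := hp.length_le
      simp only [List.length_append, List.length_cons, List.length_nil] at *
      omega
    have h3 := hpre (true :: p) hp2 (by simp)
      (by intro hcontra; injection hcontra with _ h4; rw [h4] at hlen; omega)
    simp [List.count_cons] at h3
    omega
  have hIle := hIpre I (List.prefix_refl I)
  have hlast : M₁.getLast hM₁ = false := by
    by_contra hc
    have hc' : M₁.getLast hM₁ = true := by
      cases h : M₁.getLast hM₁
      · exact absurd h hc
      · rfl
    rw [hsplit, hc'] at hcnt
    simp [List.count_cons, List.count_append] at hcnt
    omega
  have hIbal : I.count true = I.count false := by
    rw [hsplit, hlast] at hcnt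
    simp [List.count_cons, List.count_append] at hcnt
    omega
  refine ⟨I, ?_, hIpre, hIbal⟩
  rw [hsplit, hlast]
  simp

/-- Decomposition of Dyck words into concatenations of simple words. -/
theorem dyck_dec : ∀ n (l : List Bool), l.length ≤ n → Dyck l →
    ∃ ts : List PTree, (ts.map word).flatten = l := by
  intro n
  induction n with
  | zero =>
    intro l hl _
    rw [List.length_eq_zero_iff.1 (Nat.le_zero.1 hl)]
    exact ⟨[], rfl⟩
  | succ n ih =>
    intro l hl hd
    rcases eq_or_ne l [] with rfl | hne
    · exact ⟨[], rfl⟩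
    have hlpos : 0 < l.length := List.length_pos_iff.2 hne
    have hPred : ∃ k, k ≠ 0 ∧ (l.take k).count true = (l.take k).count false := by
      exact ⟨l.length, by omega, by rw [List.take_length]; exact hd.2⟩
    classical
    set k := Nat.find hPred with hk
    obtain ⟨hk0, hkbal⟩ := Nat.find_spec hPred
    have hkle : k ≤ l.length := Nat.find_min' hPred ⟨by omega, by rw [List.take_length]; exact hd.2⟩
    set B := l.take k with hB
    set R := l.drop k with hR
    have hBR : B ++ R = l := List.take_append_drop k l
    have hBlen : B.length = k := by rw [hB, List.length_take]; omega
    have hBsimple : SimpleJasso' B := by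
      refine ⟨by rw [← List.length_pos_iff]; omega, hkbal, fun p hp hpne hpproper => ?_⟩
      have hple : p.count false ≤ p.count true := hd.1 p (hp.trans ⟨R, hBR⟩)
      have hpeq : p = l.take p.length := by
        have hple2 : p.length ≤ k := by have := hp.length_le; omega
        have h1 := List.prefix_iff_eq_take.1 hp
        rw [hB, List.take_take, min_eq_left hple2] at h1
        exact h1
      have hplen : p.length < k := by
        have h1 := hp.length_le
        rw [hBlen] at h1
        rcases lt_or_eq_of_le h1 with h | h
        · exact h
        · exfalso; exact hpproper (hp.eq_of_length (by rw [hBlen, h]))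
      have hnd := Nat.find_min hPred hplen
      rw [← hpeq] at hnd
      have hne0 : p.length ≠ 0 := fun hh => hpne (List.length_eq_zero_iff.1 hh)
      have : p.count true ≠ p.count false := fun hh => hnd ⟨hne0, hh⟩
      omega
    obtain ⟨I, hBeq, hDI⟩ := simple_shape hBsimple
    have hIlen : I.length ≤ n := by
      have : B.length = I.length + 2 := by rw [hBeq]; simp
      omega
    obtain ⟨cs, hcs⟩ := ih I hIlen hDI
    have hRd : Dyck R := by
      constructor
      · intro p hp
        obtain ⟨r, hr⟩ := hp
        have hBp : (B ++ p) <+: l := ⟨r, by rw [← hBR, List.append_assoc, hr]⟩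
        have := hd.1 (B ++ p) hBp
        simp only [List.count_append] at this
        omega
      · have h2 := hd.2
        rw [← hBR] at h2
        simp only [List.count_append] at h2
        omega
    have hRlen : R.length ≤ n := by
      have : R.length = l.length - k := by rw [hR, List.length_drop]
      omega
    obtain ⟨tsR, htsR⟩ := ih R hRlen hRd
    refine ⟨PTree.node cs :: tsR, ?_⟩
    rw [List.map_cons, List.flatten_cons, word_node, hcs, htsR, ← hBR, hBeq]
    simp

theorem simple_surj {M : List Bool} (h : SimpleJasso' M) : ∃ t : PTree, word t = M := by
  obtain ⟨I, rfl, hDI⟩ := simple_shape h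
  obtain ⟨ts, hts⟩ := dyck_dec I.length I le_rfl hDI
  exact ⟨PTree.node ts, by rw [word_node, hts]; simp⟩

/-- A fuel-indexed parser for sequences of tree words. -/
def parseMany : ℕ → List Bool → Option (List PTree × List Bool)
  | 0, _ => none
  | _+1, [] => some ([], [])
  | _+1, false :: l => some ([], false :: l)
  | n+1, true :: l =>
    match parseMany n l with
    | some (ts, false :: l') =>
      match parseMany n l' with
      | some (us, rest) => some (.node ts :: us, rest)
      | none => none
    | _ => none

theorem parseMany_encode : ∀ (n : ℕ) (ts : List PTree) (rest : List Bool),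
    ((ts.map word).flatten ++ rest).length < n → rest.head? ≠ some true →
    parseMany n ((ts.map word).flatten ++ rest) = some (ts, rest) := by
  intro n
  induction n with
  | zero => intro ts rest h _; omega
  | succ n ih =>
    intro ts rest hlen hhead
    cases ts with
    | nil =>
      cases rest with
      | nil => rfl
      | cons b r =>
        cases b
        · rfl
        · exact absurd rfl hhead
    | cons t ts' =>
      obtain ⟨cs, rfl⟩ : ∃ cs, t = PTree.node cs := by
        cases t with | node cs => exact ⟨cs, rfl⟩
      have hsh : ((PTree.node cs :: ts').map word).flatten ++ rest =
          true :: ((cs.map word).flatten ++ (false :: ((ts'.map word).flatten ++ rest))) := by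
        rw [List.map_cons, List.flatten_cons, word_node]
        simp [List.append_assoc]
      rw [hsh] at hlen ⊢
      simp only [List.length_cons, List.length_append] at hlen
      rw [parseMany]
      have h1 : parseMany n ((cs.map word).flatten ++ (false :: ((ts'.map word).flatten ++ rest)))
          = some (cs, false :: ((ts'.map word).flatten ++ rest)) := by
        apply ih
        · simp only [List.length_append, List.length_cons]; omega
        · simp
      have h2 : parseMany n ((ts'.map word).flatten ++ rest) = some (ts', rest) := by
        apply ih
        · simp only [List.length_append]; omega
        · exact hhead
      rw [h1]
      dsimp only
      rw [h2]

theorem word_injective : Function.Injective word := by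
  intro t s h
  have h1 := parseMany_encode ((word s).length + 1) [t] [] (by simp [h]) (by simp)
  have h2 := parseMany_encode ((word s).length + 1) [s] [] (by simp) (by simp)
  simp only [List.map_cons, List.map_nil, List.flatten_cons, List.flatten_nil,
    List.append_nil] at h1 h2
  rw [h, h2] at h1
  simp only [Option.some.injEq, Prod.mk.injEq, List.cons.injEq] at h1
  exact h1.1.1.symm


/-- A *Dallajascar* on a finite nonempty type `S`: a parent function `phi : S → Option S`,
an ordered-children function `H : S → List S`, and a root `r : S`, such that
(i) `phi r = none`; (ii) `phi x ≠ none` for `x ≠ r`; (iii) the transitive closure of the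
parent relation is irreflexive; (iv) `H x` is a duplicate-free list whose members are
exactly the `y` with `phi y = some x`. -/
structure Dallajascar (S : Type*) [Fintype S] [Nonempty S] where
  phi : S → Option S
  H : S → List S
  r : S
  phi_root : phi r = none
  phi_ne_none : ∀ x : S, x ≠ r → phi x ≠ none
  acyclic : ∀ x : S, ¬ Relation.TransGen (fun y z => phi y = some z) x x
  H_nodup : ∀ x : S, (H x).Nodup
  mem_H : ∀ x y : S, y ∈ H x ↔ phi y = some x

namespace Dallajascar

variable {S : Type*} [Fintype S] [Nonempty S]

/-- The parent relation: `P D y x` iff `x` is the parent of `y`. -/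
def P (D : Dallajascar S) (y x : S) : Prop := D.phi y = some x

/-- The parent relation is well-founded. -/
theorem wfP (D : Dallajascar S) : WellFounded D.P := by
  haveI : IsTrans S (Relation.TransGen D.P) := ⟨fun _ _ _ h₁ h₂ => h₁.trans h₂⟩
  haveI : IsIrrefl S (Relation.TransGen D.P) := ⟨D.acyclic⟩
  exact Subrelation.wf (r := Relation.TransGen D.P)
    (fun {x y} h => Relation.TransGen.single h)
    (Finite.wellFounded_of_trans_of_irrefl _)

/-- `W D x` : the word over `{true (open), false (close)}` associated with the subtree
rooted at `x`, defined by well-founded recursion: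
`W x = true :: (((H x).map W).flatten ++ [false])`. -/
noncomputable def W (D : Dallajascar S) : S → List Bool :=
  D.wfP.fix fun x ih =>
    true :: ((((D.H x).attach.map fun (y : {y : S // y ∈ D.H x}) =>
      ih y.1 ((D.mem_H x y.1).1 y.2)).flatten) ++ [false])

/-- `M(φ,H)` : the Jassological word of the Dallajascar. -/
noncomputable def MJword (D : Dallajascar S) : List Bool := D.W D.r

end Dallajascar

namespace Dallajascar

variable {S : Type*} [Fintype S] [Nonempty S] {T : Type*} [Fintype T] [Nonempty T]

theorem root_of_phi_none (D : Dallajascar S) {x : S} (h : D.phi x = none) : x = D.r := by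
  by_contra hc
  exact D.phi_ne_none x hc h

theorem wfUp (D : Dallajascar S) : WellFounded (Function.swap D.P) := by
  haveI : IsTrans S (Relation.TransGen (Function.swap D.P)) :=
    ⟨fun _ _ _ h₁ h₂ => h₁.trans h₂⟩
  haveI : IsIrrefl S (Relation.TransGen (Function.swap D.P)) :=
    ⟨fun x h => D.acyclic x ((Relation.transGen_swap).1 h)⟩
  exact Subrelation.wf (r := Relation.TransGen (Function.swap D.P))
    (fun {x y} h => Relation.TransGen.single h)
    (Finite.wellFounded_of_trans_of_irrefl _)

/-- The subtree shape at a vertex. -/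
noncomputable def treeAt (D : Dallajascar S) : S → PTree :=
  D.wfP.fix fun x ih =>
    .node ((D.H x).attach.map fun (y : {y : S // y ∈ D.H x}) =>
      ih y.1 ((D.mem_H x y.1).1 y.2))

theorem treeAt_eq (D : Dallajascar S) (x : S) :
    D.treeAt x = .node ((D.H x).map D.treeAt) := by
  rw [treeAt, WellFounded.fix_eq]
  dsimp only
  rw [List.attach_map_val]

theorem W_eq (D : Dallajascar S) (x : S) :
    D.W x = true :: (((D.H x).map D.W).flatten ++ [false]) := by
  rw [W, WellFounded.fix_eq]
  dsimp only
  rw [List.attach_map_val]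

theorem W_eq_word (D : Dallajascar S) : ∀ x, D.W x = PTree.word (D.treeAt x) := by
  intro x
  refine D.wfP.induction (C := fun x => D.W x = PTree.word (D.treeAt x)) x fun x ih => ?_
  rw [W_eq, treeAt_eq, PTree.word_node, List.map_map]
  congr 2
  exact congrArg List.flatten (List.map_congr_left fun c hc => ih c ((D.mem_H x c).1 hc))

/-- Structure-preserving bijections transport the shape. -/
theorem treeAt_map (D : Dallajascar S) (E : Dallajascar T) (f : S ≃ T)
    (hH : ∀ x, E.H (f x) = (D.H x).map f) : ∀ x, E.treeAt (f x) = D.treeAt x := by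
  intro x
  refine D.wfP.induction (C := fun x => E.treeAt (f x) = D.treeAt x) x fun x ih => ?_
  rw [treeAt_eq, treeAt_eq, hH x, List.map_map]
  congr 1
  exact List.map_congr_left fun c hc => ih c ((D.mem_H x c).1 hc)

theorem root_map (D : Dallajascar S) (E : Dallajascar T) (f : S ≃ T)
    (hH : ∀ x, E.H (f x) = (D.H x).map f) : f D.r = E.r := by
  apply E.root_of_phi_none
  cases hE : E.phi (f D.r) with
  | none => rfl
  | some w =>
    exfalso
    have hmem : f D.r ∈ E.H w := (E.mem_H w _).2 hE
    obtain ⟨v, rfl⟩ := f.surjective w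
    rw [hH v] at hmem
    obtain ⟨u, hu, h2⟩ := List.mem_map.1 hmem
    rw [f.injective h2] at hu
    have := (D.mem_H v D.r).1 hu
    rw [D.phi_root] at this
    cases this

theorem mjword_eq_of_equiv (D : Dallajascar S) (E : Dallajascar T) (f : S ≃ T)
    (hH : ∀ x, E.H (f x) = (D.H x).map f) : E.MJword = D.MJword := by
  rw [MJword, MJword, W_eq_word, W_eq_word, ← root_map D E f hH, treeAt_map D E f hH]

variable [DecidableEq S] [DecidableEq T]

/-- The correspondence function between two Dallajascars. -/
noncomputable def corrFun (D : Dallajascar S) (E : Dallajascar T) : S → T :=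
  D.wfUp.fix fun x ih =>
    match hx : D.phi x with
    | none => E.r
    | some p => (E.H (ih p hx)).getD ((D.H p).idxOf x) E.r

theorem corrFun_root (D : Dallajascar S) (E : Dallajascar T) {x : S}
    (hx : D.phi x = none) : corrFun D E x = E.r := by
  rw [corrFun, WellFounded.fix_eq]
  dsimp only
  split
  · rfl
  · next p hp => rw [hx] at hp; cases hp

theorem corrFun_child (D : Dallajascar S) (E : Dallajascar T) {x p : S}
    (hx : D.phi x = some p) :
    corrFun D E x = (E.H (corrFun D E p)).getD ((D.H p).idxOf x) E.r := by
  conv_lhs => rw [corrFun, WellFounded.fix_eq]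
  dsimp only
  split
  · next hp => rw [hx] at hp; cases hp
  · next p' hp =>
    rw [hx] at hp
    injection hp with hp'
    subst hp'
    rfl

section Corr

variable (D : Dallajascar S) (E : Dallajascar T)

theorem corr_treeAt (hrt : D.treeAt D.r = E.treeAt E.r) :
    ∀ x, D.treeAt x = E.treeAt (corrFun D E x) := by
  intro x
  refine D.wfUp.induction (C := fun x => D.treeAt x = E.treeAt (corrFun D E x)) x
    fun x ih => ?_
  cases hx : D.phi x with
  | none =>
    rw [corrFun_root D E hx, D.root_of_phi_none hx]
    exact hrt
  | some p =>
    have hx' : x ∈ D.H p := (D.mem_H p x).2 hx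
    have hidx : (D.H p).idxOf x < (D.H p).length := List.idxOf_lt_length_iff.2 hx'
    have hp := ih p hx
    rw [treeAt_eq D p, treeAt_eq E _] at hp
    injection hp with hmap
    have hlen : (D.H p).length = (E.H (corrFun D E p)).length := by
      have := congrArg List.length hmap
      simpa using this
    rw [corrFun_child D E hx, List.getD_eq_getElem _ _ (by omega)]
    have h1 : D.treeAt x
        = ((D.H p).map D.treeAt)[(D.H p).idxOf x]'(by simpa using hidx) := by
      rw [List.getElem_map]
      congr 1
      exact (List.getElem_idxOf hidx).symm
    rw [h1]
    have h2 : (((D.H p).map D.treeAt))[(D.H p).idxOf x]'(by simpa using hidx)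
        = (((E.H (corrFun D E p)).map E.treeAt))[(D.H p).idxOf x]'(by
            simp only [List.length_map]; omega) := by
      congr 1
    rw [h2, List.getElem_map]

theorem corr_H (hrt : D.treeAt D.r = E.treeAt E.r) :
    ∀ p, E.H (corrFun D E p) = (D.H p).map (corrFun D E) := by
  intro p
  have hp := corr_treeAt D E hrt p
  rw [treeAt_eq D p, treeAt_eq E _] at hp
  injection hp with hmap
  have hlen : (D.H p).length = (E.H (corrFun D E p)).length := by
    have := congrArg List.length hmap
    simpa using this
  apply List.ext_getElem (by simpa using hlen.symm)
  intro i h1 h2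
  rw [List.getElem_map]
  have hc : D.phi ((D.H p)[i]'(by simpa using h2)) = some p :=
    (D.mem_H p _).1 (List.getElem_mem _)
  rw [corrFun_child D E hc]
  rw [List.Nodup.idxOf_getElem (D.H_nodup p) i (by simpa using h2)]
  rw [List.getD_eq_getElem _ _ h1]

theorem corr_corr (hrt : D.treeAt D.r = E.treeAt E.r) :
    ∀ x, corrFun E D (corrFun D E x) = x := by
  intro x
  refine D.wfUp.induction (C := fun x => corrFun E D (corrFun D E x) = x) x
    fun x ih => ?_
  cases hx : D.phi x with
  | none =>
    rw [corrFun_root D E hx, corrFun_root E D E.phi_root, D.root_of_phi_none hx]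
  | some p =>
    have hx' : x ∈ D.H p := (D.mem_H p x).2 hx
    have hidx : (D.H p).idxOf x < (D.H p).length := List.idxOf_lt_length_iff.2 hx'
    have hp := corr_treeAt D E hrt p
    rw [treeAt_eq D p, treeAt_eq E _] at hp
    injection hp with hmap
    have hlen : (D.H p).length = (E.H (corrFun D E p)).length := by
      have := congrArg List.length hmap
      simpa using this
    have hfx : corrFun D E x
        = (E.H (corrFun D E p))[(D.H p).idxOf x]'(by omega) := by
      rw [corrFun_child D E hx, List.getD_eq_getElem _ _ (by omega)]
    have hmem : corrFun D E x ∈ E.H (corrFun D E p) := by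
      rw [hfx]; exact List.getElem_mem _
    have hphi : E.phi (corrFun D E x) = some (corrFun D E p) :=
      (E.mem_H _ _).1 hmem
    rw [corrFun_child E D hphi, ih p hx]
    have hidx2 : (E.H (corrFun D E p)).idxOf (corrFun D E x) = (D.H p).idxOf x := by
      rw [hfx]
      exact List.Nodup.idxOf_getElem (E.H_nodup _) _ _
    rw [hidx2, List.getD_eq_getElem _ _ hidx, List.getElem_idxOf hidx]

/-- The correspondence bijection between two Dallajascars with the same shape. -/
noncomputable def corrEquiv (hrt : D.treeAt D.r = E.treeAt E.r) : S ≃ T where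
  toFun := corrFun D E
  invFun := corrFun E D
  left_inv := corr_corr D E hrt
  right_inv := corr_corr E D hrt.symm

end Corr

end Dallajascar

theorem gen_acyclic {α : Type*} (R : α → α → Prop) (m : α → ℕ)
    (h : ∀ a b, R a b → m b < m a) : ∀ x, ¬ Relation.TransGen R x x := by
  have key : ∀ a b, Relation.TransGen R a b → m b < m a := by
    intro a b hab
    induction hab with
    | single h1 => exact h _ _ h1
    | tail _ h2 ih => exact lt_trans (h _ _ h2) ih
  exact fun x hx => lt_irrefl _ (key x x hx)

namespace PTree

/-- The children list. -/
def kids : PTree → List PTree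
  | .node ts => ts

/-- Subtree at a position. -/
def subAt : PTree → List ℕ → Option PTree
  | t, [] => some t
  | .node ts, i :: p => if h : i < ts.length then subAt (ts[i]'h) p else none
termination_by t p => p.length

theorem subAt_nil (t : PTree) : subAt t [] = some t := by
  cases t with | node ts => rw [subAt]

theorem subAt_cons (ts : List PTree) (i : ℕ) (p : List ℕ) :
    subAt (.node ts) (i :: p) = if h : i < ts.length then subAt (ts[i]'h) p else none := by
  rw [subAt]

theorem subAt_concat (t : PTree) (p : List ℕ) (i : ℕ) :
    subAt t (p ++ [i]) = (subAt t p).bind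
      (fun s => if h : i < s.kids.length then some (s.kids[i]'h) else none) := by
  induction p generalizing t with
  | nil =>
    rw [List.nil_append, subAt_nil, Option.bind_some]
    cases t with | node ts =>
    show _ = if h : i < ts.length then some (ts[i]'h) else none
    rw [subAt_cons]
    split
    · exact subAt_nil _
    · rfl
  | cons j q ih =>
    cases t with | node ts =>
    rw [List.cons_append, subAt_cons, subAt_cons]
    split
    · exact ih _
    · rfl

/-- Number of children of the subtree at a position. -/
def numKids (t : PTree) (p : List ℕ) : ℕ := ((subAt t p).map (fun s => s.kids.length)).getD 0

theorem numKids_eq {t : PTree} {p : List ℕ} {s : PTree} (hs : subAt t p = some s) :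
    numKids t p = s.kids.length := by
  rw [numKids, hs, Option.map_some, Option.getD_some]

/-- The list of all valid positions. -/
def posList : PTree → List (List ℕ)
  | .node ts => [] :: ((List.range ts.length).attach.map
      (fun i => (posList (ts[i.1]'(List.mem_range.1 i.2))).map (i.1 :: ·))).flatten
termination_by t => sizeOf t
decreasing_by exact sizeOf_lt_of_mem' (List.getElem_mem _)

theorem mem_posList_of_isSome :
    ∀ t : PTree, ∀ p : List ℕ, (subAt t p).isSome → p ∈ posList t := by
  refine PTree.strongInd (fun ts ih => ?_)
  intro p hp
  cases p with
  | nil => rw [posList]; exact List.mem_cons_self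
  | cons i q =>
    rw [subAt_cons] at hp
    split at hp
    · next hi =>
      have hq := ih _ (List.getElem_mem hi) q hp
      rw [posList]
      apply List.mem_cons_of_mem
      rw [List.mem_flatten]
      refine ⟨(posList (ts[i]'hi)).map (i :: ·), ?_, List.mem_map_of_mem hq⟩
      rw [List.mem_map]
      exact ⟨⟨i, List.mem_range.2 hi⟩, List.mem_attach _ _, rfl⟩
    · cases hp

/-- The type of positions of a tree. -/
def Pos (t : PTree) : Type := {p : List ℕ // (subAt t p).isSome}

instance (t : PTree) : DecidableEq (Pos t) := fun a b =>
  decidable_of_iff (a.1 = b.1) Subtype.ext_iff.symm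

noncomputable instance (t : PTree) : Fintype (Pos t) :=
  Fintype.ofList ((posList t).filterMap
    (fun p => if h : (subAt t p).isSome then some ⟨p, h⟩ else none))
    (by
      rintro ⟨p, hp⟩
      exact List.mem_filterMap.2 ⟨p, mem_posList_of_isSome t p hp, dif_pos hp⟩)

instance (t : PTree) : Nonempty (Pos t) := ⟨⟨[], by rw [subAt_nil]; rfl⟩⟩

theorem pos_concat_isSome {t : PTree} (x : Pos t) (i : ℕ) (hi : i < numKids t x.1) :
    (subAt t (x.1 ++ [i])).isSome := by
  obtain ⟨s, hs⟩ := Option.isSome_iff_exists.mp x.2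
  rw [subAt_concat, hs, Option.bind_some, dif_pos (by rwa [numKids_eq hs] at hi)]
  rfl

theorem pos_dropLast_isSome {t : PTree} (x : Pos t) (hne : x.1 ≠ []) :
    (subAt t x.1.dropLast).isSome := by
  have h := x.2
  rw [← List.dropLast_append_getLast hne, subAt_concat] at h
  cases hs : subAt t x.1.dropLast with
  | none => rw [hs] at h; cases h
  | some s => rfl

end PTree

open PTree

/-- The canonical Dallajascar on the positions of a tree. -/
noncomputable def treeDallajascar (t : PTree) : Dallajascar (Pos t) where
  phi x := if hp : x.1 = [] then none else some ⟨x.1.dropLast, pos_dropLast_isSome x hp⟩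
  H x := (List.range (numKids t x.1)).attach.map
    (fun i => ⟨x.1 ++ [i.1], pos_concat_isSome x i.1 (List.mem_range.1 i.2)⟩)
  r := ⟨[], by rw [subAt_nil]; rfl⟩
  phi_root := by dsimp only; rw [dif_pos rfl]
  phi_ne_none := by
    rintro ⟨p, hp⟩ hne
    dsimp only
    rw [dif_neg (fun h => hne (Subtype.ext h))]
    simp
  acyclic := by
    refine gen_acyclic _ (fun p => p.1.length) ?_
    rintro ⟨p, hp⟩ ⟨q, hq⟩ hR
    dsimp only at hR ⊢
    split at hR
    · cases hR
    · next hne =>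
      injection hR with h
      have hq1 : q = p.dropLast := (congrArg Subtype.val h).symm
      have hpne : p ≠ [] := hne
      rw [hq1, List.length_dropLast]
      have : p.length ≠ 0 := fun hh => hpne (List.length_eq_zero_iff.1 hh)
      omega
  H_nodup := by
    intro x
    refine List.Nodup.map ?_ (List.nodup_attach.2 List.nodup_range)
    rintro ⟨i, hi⟩ ⟨j, hj⟩ hij
    have h1 := congrArg Subtype.val hij
    dsimp only at h1
    have h2 := List.append_cancel_left h1
    injection h2 with h3
    exact Subtype.ext h3
  mem_H := by
    rintro ⟨p, hp⟩ ⟨q, hq⟩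
    constructor
    · intro hmem
      have hmem := List.mem_map.1 hmem
      obtain ⟨⟨i, hi⟩, -, heq⟩ := hmem
      have hq1 : q = p ++ [i] := (congrArg Subtype.val heq).symm
      have hqne : q ≠ [] := by rw [hq1]; simp
      dsimp only
      rw [dif_neg hqne]
      congr 1
      apply Subtype.ext
      dsimp only
      rw [hq1]
      exact List.dropLast_concat ..
    · intro hphi
      dsimp only at hphi
      rw [dite_eq_iff] at hphi
      rcases hphi with ⟨h, hc⟩ | ⟨hne, hc⟩
      · cases hc
      · injection hc with hc
        have hq1 : q.dropLast = p := congrArg Subtype.val hc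
        have hsplit : p ++ [q.getLast hne] = q := by
          rw [← hq1]; exact List.dropLast_append_getLast hne
        have hval := hq
        rw [← hsplit, subAt_concat] at hval
        cases hs : subAt t p with
        | none => rw [hs] at hval; cases hval
        | some s =>
          rw [hs, Option.bind_some] at hval
          refine List.mem_map.2 ?_
          have hlt : q.getLast hne < s.kids.length := by
            by_contra hcon
            rw [dif_neg hcon] at hval
            cases hval
          refine ⟨⟨q.getLast hne, List.mem_range.2 ?_⟩, List.mem_attach _ _, ?_⟩
          · rw [numKids_eq hs]; exact hlt
          · exact Subtype.ext hsplit

theorem opt_get_eq {α : Type*} {o : Option α} {v : α} (h : o = some v) (ho : o.isSome) :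
    o.get ho = v := by subst h; rfl

theorem treeAt_treeDallajascar (t : PTree) :
    ∀ x : Pos t, (treeDallajascar t).treeAt x = (subAt t x.1).get x.2 := by
  intro x
  refine (treeDallajascar t).wfP.induction
    (C := fun x => (treeDallajascar t).treeAt x = (subAt t x.1).get x.2) x fun x ih => ?_
  obtain ⟨s, hs⟩ := Option.isSome_iff_exists.mp x.2
  obtain ⟨ks, rfl⟩ : ∃ ks, s = PTree.node ks := by cases s with | node ks => exact ⟨ks, rfl⟩
  rw [Dallajascar.treeAt_eq, opt_get_eq hs]
  congr 1
  have hnum : numKids t x.1 = ks.length := numKids_eq hs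
  have hHx : (treeDallajascar t).H x = (List.range (numKids t x.1)).attach.map
      (fun i => (⟨x.1 ++ [i.1], pos_concat_isSome x i.1 (List.mem_range.1 i.2)⟩ : Pos t)) := rfl
  rw [hHx]
  refine Eq.trans List.map_map ?_
  apply List.ext_getElem (by simpa using hnum)
  intro i h1 h2
  have hi : i < numKids t x.1 := by simpa using h1
  have hrange : i < (List.range (numKids t x.1)).length := by simpa using hi
  rw [List.getElem_map, List.getElem_attach]
  have hcval : subAt t (x.1 ++ [(List.range (numKids t x.1))[i]'hrange])
      = some (ks[i]'h2) := by
    rw [List.getElem_range, subAt_concat, hs, Option.bind_some,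
      dif_pos (show i < (PTree.node ks).kids.length from h2)]
    rfl
  set c : Pos t := ⟨x.1 ++ [(List.range (numKids t x.1))[i]'hrange],
    pos_concat_isSome x _ (List.mem_range.1 (List.getElem_mem hrange))⟩ with hcdef
  show (treeDallajascar t).treeAt c = ks[i]'h2
  have hmem : c ∈ (treeDallajascar t).H x := by
    rw [hHx]
    exact List.mem_map.2 ⟨⟨_, List.getElem_mem hrange⟩, List.mem_attach _ _, rfl⟩
  have hP := ((treeDallajascar t).mem_H x c).1 hmem
  rw [ih c hP, opt_get_eq hcval]

namespace Dallajascar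

variable {S : Type*} [Fintype S] [Nonempty S] {T : Type*} [Fintype T] [Nonempty T]

/-- Transport of a Dallajascar along a bijection. -/
noncomputable def transport (D : Dallajascar S) (e : S ≃ T) : Dallajascar T where
  phi y := (D.phi (e.symm y)).map e
  H x := (D.H (e.symm x)).map e
  r := e D.r
  phi_root := by rw [Equiv.symm_apply_apply, D.phi_root]; rfl
  phi_ne_none := by
    intro x hx h
    have hnone : D.phi (e.symm x) = none := by
      cases hD : D.phi (e.symm x) with
      | none => rfl
      | some w => rw [hD] at h; cases h
    exact D.phi_ne_none (e.symm x)
      (fun hh => hx (by rw [← hh, Equiv.apply_symm_apply])) hnone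
  acyclic := by
    intro x hx
    have key : ∀ a b : T, Relation.TransGen (fun y z => (D.phi (e.symm y)).map e = some z) a b →
        Relation.TransGen (fun y z => D.phi y = some z) (e.symm a) (e.symm b) := by
      intro a b hab
      induction hab with
      | single h1 =>
        obtain ⟨w, hw, hwe⟩ := Option.map_eq_some_iff.mp h1
        exact Relation.TransGen.single (by rw [hw, ← hwe, Equiv.symm_apply_apply])
      | tail _ h2 ih =>
        obtain ⟨w, hw, hwe⟩ := Option.map_eq_some_iff.mp h2
        exact Relation.TransGen.tail ih (by rw [hw, ← hwe, Equiv.symm_apply_apply])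
    exact D.acyclic (e.symm x) (key x x hx)
  H_nodup := fun x => (D.H_nodup _).map e.injective
  mem_H := by
    intro x y
    rw [List.mem_map]
    constructor
    · rintro ⟨a, ha, rfl⟩
      rw [Equiv.symm_apply_apply, (D.mem_H (e.symm x) a).1 ha, Option.map_some,
        Equiv.apply_symm_apply]
    · intro h
      obtain ⟨w, hw, hwe⟩ := Option.map_eq_some_iff.mp h
      refine ⟨e.symm y, ?_, by rw [Equiv.apply_symm_apply]⟩
      rw [D.mem_H, hw, ← hwe, Equiv.symm_apply_apply]

theorem transport_mjword (D : Dallajascar S) (e : S ≃ T) :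
    (D.transport e).MJword = D.MJword := by
  apply mjword_eq_of_equiv D (D.transport e) e
  intro x
  show (D.H (e.symm (e x))).map e = (D.H x).map e
  rw [Equiv.symm_apply_apply]

end Dallajascar

/-- A *Mot Jassologique Simple* : a nonempty word containing equally many opening
(`true`) and closing (`false`) characters, every nonempty proper prefix of which contains
strictly more opening than closing characters. -/
def SimpleJasso (M : List Bool) : Prop :=
  M ≠ [] ∧ M.count true = M.count false ∧
    ∀ t : List Bool, t <+: M → t ≠ [] → t ≠ M → t.count false < t.count true

/-- The Jassological word of a Dallajascar on `Fin (n + 1)`, as a function on the sigma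
type of all such Dallajascars. -/
noncomputable def MJsig (a : Σ n : ℕ, Dallajascar (Fin (n + 1))) : List Bool :=
  a.2.MJword

/-- Equivalence of Dallajascars: a bijection `f` with `K (f a) = (H a).map f`. -/
def EquivD (a b : Σ n : ℕ, Dallajascar (Fin (n + 1))) : Prop :=
  ∃ f : Fin (a.1 + 1) ≃ Fin (b.1 + 1), ∀ x, b.2.H (f x) = (a.2.H x).map f


theorem simpleJasso_eq (M : List Bool) : SimpleJasso M ↔ SimpleJasso' M := Iff.rfl

theorem equivD_equivalence : Equivalence EquivD where
  refl a := ⟨Equiv.refl _, fun x => by simp⟩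
  symm {a b} := by
    rintro ⟨f, hf⟩
    refine ⟨f.symm, fun y => ?_⟩
    have h := hf (f.symm y)
    rw [Equiv.apply_symm_apply] at h
    rw [h, List.map_map]
    simp
  trans {a b c} := by
    rintro ⟨f, hf⟩ ⟨g, hg⟩
    refine ⟨f.trans g, fun x => ?_⟩
    rw [Equiv.trans_apply, hg, hf, List.map_map]
    rfl

theorem mjsig_const : ∀ a b, EquivD a b → MJsig a = MJsig b := by
  rintro a b ⟨f, hf⟩
  exact (Dallajascar.mjword_eq_of_equiv a.2 b.2 f hf).symm

theorem mjsig_eq_word (a : Σ n : ℕ, Dallajascar (Fin (n + 1))) :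
    MJsig a = PTree.word (a.2.treeAt a.2.r) := by
  rw [MJsig, Dallajascar.MJword, Dallajascar.W_eq_word]

theorem mjsig_simple (a : Σ n : ℕ, Dallajascar (Fin (n + 1))) : SimpleJasso (MJsig a) := by
  rw [simpleJasso_eq, mjsig_eq_word]
  exact simple_word _

theorem exists_mjsig (M : List Bool) (h : SimpleJasso M) :
    ∃ a : Σ n : ℕ, Dallajascar (Fin (n + 1)), MJsig a = M := by
  obtain ⟨t, rfl⟩ := simple_surj ((simpleJasso_eq M).1 h)
  have hcard : 0 < Fintype.card (Pos t) := Fintype.card_pos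
  set n := Fintype.card (Pos t) - 1 with hn0
  have hn : Fintype.card (Pos t) = n + 1 := by omega
  let e : Pos t ≃ Fin (n + 1) := (Fintype.equivFin (Pos t)).trans (finCongr hn)
  refine ⟨⟨n, (treeDallajascar t).transport e⟩, ?_⟩
  show ((treeDallajascar t).transport e).MJword = _
  rw [Dallajascar.transport_mjword, Dallajascar.MJword, Dallajascar.W_eq_word,
    treeAt_treeDallajascar]
  rw [opt_get_eq (show subAt t ((treeDallajascar t).r).1 = some t from subAt_nil t)]

theorem equivD_of_mjsig {a b : Σ n : ℕ, Dallajascar (Fin (n + 1))}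
    (h : MJsig a = MJsig b) : EquivD a b := by
  rw [mjsig_eq_word, mjsig_eq_word] at h
  have hrt := word_injective h
  exact ⟨Dallajascar.corrEquiv a.2 b.2 hrt, fun x => Dallajascar.corr_H a.2 b.2 hrt x⟩

/-- Corollaire fondamental 3.3.6: `EquivD` is an equivalence relation, the Jassological
word is constant on equivalence classes, and the induced map on the quotient is a
bijection onto the set of Simple Jassological words. -/
theorem mjword_bijection :
    Equivalence EquivD ∧
    ∃ h : ∀ a b, EquivD a b → MJsig a = MJsig b,
      Function.Injective (Quot.lift MJsig h) ∧
      Set.range (Quot.lift MJsig h) = {M : List Bool | SimpleJasso M} := by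
  refine ⟨equivD_equivalence, mjsig_const, ?_, ?_⟩
  · intro q1 q2
    induction q1 using Quot.ind with | _ a =>
    induction q2 using Quot.ind with | _ b =>
    intro h
    exact Quot.sound (equivD_of_mjsig h)
  · ext M
    simp only [Set.mem_range, Set.mem_setOf_eq]
    constructor
    · rintro ⟨q, rfl⟩
      induction q using Quot.ind with | _ a =>
      exact mjsig_simple a
    · intro h
      obtain ⟨a, ha⟩ := exists_mjsig M h
      exact ⟨Quot.mk _ a, ha⟩
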